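/- Let (X, φ) be an algebraic convex geometry and C a maximal chain in the lattice of closed sets. Let C* = {D ∈ C : D has a lower cover in C}. Then the map h_C(x) = ⋂{C' ∈ C : x ∈ C'} is a bijection from X onto C*; moreover for each x, h_C(x) = h_C(x)_* ∪ {x} where h_C(x)_* is the lower cover of h_C(x) in C. -/

import Mathlib

/-- φ is a closure operator: extensive, monotone, idempotent. -/
def IsClosureOp {X : Type*} (φ : Set X → Set X) : Prop :=
  (∀ A, A ⊆ φ A) ∧ (∀ A B, A ⊆ B → φ A ⊆ φ B) ∧ (∀ A, φ (φ A) = φ A)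

/-- φ is algebraic (finitary): the closure of a set is the union of closures of its
finite subsets. -/
def IsAlgebraicOp {X : Type*} (φ : Set X → Set X) : Prop :=
  ∀ A, φ A = ⋃₀ {T | ∃ B, B ⊆ A ∧ B.Finite ∧ T = φ B}

/-- The anti-exchange property. -/
def AntiExchange {X : Type*} (φ : Set X → Set X) : Prop :=
  ∀ (x y : X) (A : Set X), x ≠ y → φ A = A → x ∉ A →
    x ∈ φ (A ∪ {y}) → y ∉ φ (A ∪ {x})

/-- A convex geometry: a zero-closure operator with the anti-exchange property. -/
def IsConvexGeometry {X : Type*} (φ : Set X → Set X) : Prop :=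
  IsClosureOp φ ∧ φ ∅ = ∅ ∧ AntiExchange φ

/-- An algebraic convex geometry. -/
def IsAlgConvexGeometry {X : Type*} (φ : Set X → Set X) : Prop :=
  IsClosureOp φ ∧ IsAlgebraicOp φ ∧ φ ∅ = ∅ ∧ AntiExchange φ

/-- An algebraic subset of Pow X : closed under arbitrary intersections
(with ⋂₀ ∅ = X) and under unions of nonempty up-directed subfamilies. -/
def IsAlgSubset {X : Type*} (F : Set (Set X)) : Prop :=
  (∀ S ⊆ F, ⋂₀ S ∈ F) ∧
  (∀ S ⊆ F, S.Nonempty → (∀ A ∈ S, ∀ B ∈ S, ∃ C ∈ S, A ∪ B ⊆ C) → ⋃₀ S ∈ F)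

/-- A maximal chain in the lattice of φ-closed sets. -/
def IsMaxChainOfClosed {X : Type*} (φ : Set X → Set X) (C : Set (Set X)) : Prop :=
  C ⊆ {Y | φ Y = Y} ∧ IsChain (· ⊆ ·) C ∧
  ∀ T, φ T = T → (∀ A ∈ C, T ⊆ A ∨ A ⊆ T) → T ∈ C

/-- D_* is a lower cover of D within the chain C. -/
def LowerCoverIn {X : Type*} (C : Set (Set X)) (Dst D : Set X) : Prop :=
  Dst ∈ C ∧ D ∈ C ∧ Dst ⊂ D ∧ ∀ E ∈ C, ¬ (Dst ⊂ E ∧ E ⊂ D)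

/-- For a maximal chain C of an algebraic convex geometry, h_C is a bijection from X
onto the set C* of elements of C having a lower cover in C, and
h_C(x) = (h_C(x))_* ∪ {x}. -/
lemma finite_subset_chain_sUnion {X : Type*} {S : Set (Set X)}
    (hch : IsChain (· ⊆ ·) S) (hne : S.Nonempty) {B : Set X} (hB : B.Finite) :
    B ⊆ ⋃₀ S → ∃ T ∈ S, B ⊆ T := by
  refine Set.Finite.induction_on (motive := fun B _ => B ⊆ ⋃₀ S → ∃ T ∈ S, B ⊆ T) B hB
    (fun _ => ⟨hne.choose, hne.choose_spec, Set.empty_subset _⟩) ?_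
  intro a s _ _ ih hsub
  obtain ⟨T, hT, hsT⟩ := ih (fun x hx => hsub (Set.mem_insert_of_mem _ hx))
  obtain ⟨U, hU, haU⟩ := hsub (Set.mem_insert a s)
  rcases hch.total hT hU with h | h
  · exact ⟨U, hU, Set.insert_subset haU (hsT.trans h)⟩
  · exact ⟨T, hT, Set.insert_subset (h haU) hsT⟩

theorem stmt11 {X : Type*} (φ : Set X → Set X)
    (hacg : IsAlgConvexGeometry φ) (C : Set (Set X))
    (hC : IsMaxChainOfClosed φ C) :
    (∀ x : X, ∃ Dst, LowerCoverIn C Dst (⋂₀ {C' | C' ∈ C ∧ x ∈ C'}) ∧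
        (⋂₀ {C' | C' ∈ C ∧ x ∈ C'}) = Dst ∪ {x}) ∧
      Function.Injective (fun x : X => ⋂₀ {C' | C' ∈ C ∧ x ∈ C'}) ∧
      (∀ D ∈ C, (∃ Dst, LowerCoverIn C Dst D) →
        ∃ x : X, (⋂₀ {C' | C' ∈ C ∧ x ∈ C'}) = D) := by
  obtain ⟨⟨hext, hmono, hidem⟩, halg, hemp, hae⟩ := hacg
  obtain ⟨hcl, hch, hmax⟩ := hC
  have hcl' : ∀ A ∈ C, φ A = A := fun A hA => hcl hA
  have hXcl : φ (Set.univ : Set X) = Set.univ :=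
    Set.Subset.antisymm (Set.subset_univ _) (hext _)
  -- C is closed under arbitrary intersections
  have hInter : ∀ S ⊆ C, ⋂₀ S ∈ C := by
    intro S hS
    apply hmax
    · rcases Set.eq_empty_or_nonempty S with rfl | hne
      · simpa using hXcl
      · apply Set.Subset.antisymm _ (hext _)
        intro t ht
        rw [Set.mem_sInter]
        intro T hT
        have h1 : φ (⋂₀ S) ⊆ T := by
          have := hmono _ _ (Set.sInter_subset_of_mem hT)
          rwa [hcl' T (hS hT)] at this
        exact h1 ht
    · intro A hA
      by_cases h : ∀ T ∈ S, A ⊆ T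
      · right; exact Set.subset_sInter h
      · push_neg at h
        obtain ⟨T, hT, hTA⟩ := h
        rcases hch.total (hS hT) hA with h1 | h1
        · left; exact (Set.sInter_subset_of_mem hT).trans h1
        · exact absurd h1 hTA
  -- C is closed under nonempty unions
  have hUnion : ∀ S ⊆ C, S.Nonempty → ⋃₀ S ∈ C := by
    intro S hS hne
    have hchS : IsChain (· ⊆ ·) S := hch.mono hS
    apply hmax
    · apply Set.Subset.antisymm _ (hext _)
      intro t ht
      rw [halg (⋃₀ S)] at ht
      obtain ⟨T, ⟨B, hBsub, hBfin, rfl⟩, htT⟩ := ht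
      obtain ⟨U, hU, hBU⟩ := finite_subset_chain_sUnion hchS hne hBfin hBsub
      have : φ B ⊆ U := by
        have := hmono _ _ hBU
        rwa [hcl' U (hS hU)] at this
      exact ⟨U, hU, this htT⟩
    · intro A hA
      by_cases h : ∀ T ∈ S, T ⊆ A
      · left; exact Set.sUnion_subset h
      · push_neg at h
        obtain ⟨T, hT, hTA⟩ := h
        rcases hch.total (hS hT) hA with h1 | h1
        · exact absurd h1 hTA
        · right; exact h1.trans (Set.subset_sUnion_of_mem hT)
  have hempC : (∅ : Set X) ∈ C := hmax ∅ hemp (fun A _ => Or.inl (Set.empty_subset A))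
  -- the key fact
  have key : ∀ x : X, ∃ Dst, LowerCoverIn C Dst (⋂₀ {C' | C' ∈ C ∧ x ∈ C'}) ∧
      (⋂₀ {C' | C' ∈ C ∧ x ∈ C'}) = Dst ∪ {x} := by
    intro x
    set Hx := ⋂₀ {C' | C' ∈ C ∧ x ∈ C'} with hHxdef
    have hHxC : Hx ∈ C := hInter _ (fun T hT => hT.1)
    have hxHx : x ∈ Hx := fun T hT => hT.2
    have hHxmin : ∀ A ∈ C, x ∈ A → Hx ⊆ A := fun A hA hxA =>
      Set.sInter_subset_of_mem ⟨hA, hxA⟩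
    set Dst := ⋃₀ {C' | C' ∈ C ∧ x ∉ C'} with hDstdef
    have hDstC : Dst ∈ C := hUnion _ (fun T hT => hT.1) ⟨∅, hempC, fun h => h.elim⟩
    have hxDst : x ∉ Dst := by
      rintro ⟨T, hT, hxT⟩
      exact hT.2 hxT
    have hsub : Dst ⊆ Hx := by
      apply Set.sUnion_subset
      intro T hT
      rcases hch.total hT.1 hHxC with h | h
      · exact h
      · exact absurd (h hxHx) hT.2
    have hssub : Dst ⊂ Hx := ⟨hsub, fun h => hxDst (h hxHx)⟩
    have hsplit : ∀ A ∈ C, A ⊆ Dst ∨ Hx ⊆ A := by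
      intro A hA
      by_cases hxA : x ∈ A
      · right; exact hHxmin A hA hxA
      · left; exact Set.subset_sUnion_of_mem ⟨hA, hxA⟩
    have hcov : ∀ E ∈ C, ¬(Dst ⊂ E ∧ E ⊂ Hx) := by
      rintro E hE ⟨h1, h2⟩
      rcases hsplit E hE with h | h
      · exact h1.2 h
      · exact h2.2 h
    have hmem : ∀ M : Set X, φ M = M → Dst ⊆ M → M ⊆ Hx → M ∈ C := by
      intro M hMcl h1 h2
      apply hmax M hMcl
      intro A hA
      rcases hsplit A hA with h | h
      · right; exact h.trans h1
      · left; exact h2.trans h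
    have hDstcl : φ Dst = Dst := hcl' _ hDstC
    have heq : Hx = Dst ∪ {x} := by
      have hsubK : Dst ∪ {x} ⊆ Hx :=
        Set.union_subset hsub (Set.singleton_subset_iff.2 hxHx)
      have hKsub : φ (Dst ∪ {x}) ⊆ Hx := by
        have := hmono _ _ hsubK
        rwa [hcl' _ hHxC] at this
      have hKC : φ (Dst ∪ {x}) ∈ C :=
        hmem _ (hidem _) (Set.subset_union_left.trans (hext _)) hKsub
      have hKeq : φ (Dst ∪ {x}) = Hx :=
        Set.Subset.antisymm hKsub
          (hHxmin _ hKC (hext _ (Set.mem_union_right _ rfl)))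
      by_contra hne
      have hex : ∃ y, y ∈ Hx ∧ y ∉ Dst ∪ {x} := by
        by_contra h
        push_neg at h
        exact hne (Set.Subset.antisymm h hsubK)
      obtain ⟨y, hyH, hyn⟩ := hex
      have hyx : y ≠ x := fun h => hyn (Or.inr (by simp [h]))
      have hyD : y ∉ Dst := fun h => hyn (Or.inl h)
      have hyK : y ∈ φ (Dst ∪ {x}) := hKeq ▸ hyH
      have hxM : x ∉ φ (Dst ∪ {y}) := hae y x Dst hyx hDstcl hyD hyK
      have hMsub : φ (Dst ∪ {y}) ⊆ Hx := by
        have h1 : Dst ∪ {y} ⊆ Hx :=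
          Set.union_subset hsub (Set.singleton_subset_iff.2 hyH)
        have := hmono _ _ h1
        rwa [hcl' _ hHxC] at this
      have hMC : φ (Dst ∪ {y}) ∈ C :=
        hmem _ (hidem _) (Set.subset_union_left.trans (hext _)) hMsub
      refine hcov _ hMC ⟨⟨Set.subset_union_left.trans (hext _), ?_⟩, ⟨hMsub, ?_⟩⟩
      · intro h
        exact hyD (h (hext _ (Set.mem_union_right _ rfl)))
      · intro h
        exact hxM (h hxHx)
    exact ⟨Dst, ⟨hDstC, hHxC, hssub, hcov⟩, heq⟩
  refine ⟨key, ?_, ?_⟩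
  · intro x y hxy
    simp only at hxy
    by_contra hne
    obtain ⟨Dy, ⟨hDyC, hHyC, hssy, _⟩, heqy⟩ := key y
    have hxHx : x ∈ ⋂₀ {C' | C' ∈ C ∧ x ∈ C'} := fun T hT => hT.2
    have hxHy : x ∈ ⋂₀ {C' | C' ∈ C ∧ y ∈ C'} := hxy ▸ hxHx
    rw [heqy] at hxHy
    rcases hxHy with hxDy | hxy'
    · have h1 : (⋂₀ {C' | C' ∈ C ∧ x ∈ C'}) ⊆ Dy :=
        Set.sInter_subset_of_mem ⟨hDyC, hxDy⟩
      rw [hxy] at h1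
      exact hssy.2 h1
    · exact hne hxy'
  · rintro D hD ⟨Dst, hDstC, hDC, hss, hcov⟩
    obtain ⟨x, hxD, hxDst⟩ := Set.not_subset.1 (fun h => hss.2 h)
    refine ⟨x, ?_⟩
    have hHxC : (⋂₀ {C' | C' ∈ C ∧ x ∈ C'}) ∈ C := hInter _ (fun T hT => hT.1)
    have hxHx : x ∈ ⋂₀ {C' | C' ∈ C ∧ x ∈ C'} := fun T hT => hT.2
    have hHxD : (⋂₀ {C' | C' ∈ C ∧ x ∈ C'}) ⊆ D := Set.sInter_subset_of_mem ⟨hD, hxD⟩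
    have hDstHx : Dst ⊂ ⋂₀ {C' | C' ∈ C ∧ x ∈ C'} := by
      rcases hch.total hDstC hHxC with h | h
      · exact ⟨h, fun h' => hxDst (h' hxHx)⟩
      · exact absurd (h hxHx) hxDst
    by_contra hne
    exact hcov _ hHxC ⟨hDstHx, ⟨hHxD, fun h' => hne (Set.Subset.antisymm hHxD h')⟩⟩
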